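/- Let τ, δ ∈ (0,1] and K > 1. Then there exist L > 0 and η > 0 depending only on τ, δ, K such that for every N ≥ Ln the following holds: if A is an N×n random matrix with independent rows R_i satisfying P{⟨R_i, y⟩ < −τ} ≥ δ for every unit vector y ∈ S^{n−1} and every i ≤ N, and F is any N×N random matrix (not necessarily independent of A), then P{∃ y ∈ S^{n−1} : FAy ∈ R₊^N} ≤ exp(−δ²N/4) + P{‖A‖ > K√N} + P{‖F − I‖ > η}. -/

import Mathlib

open MeasureTheory ProbabilityTheory

/-- The operator (spectral) norm of a matrix, viewed as a map between Euclidean spaces. -/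
noncomputable def matOpNorm {m n : ℕ} (A : Matrix (Fin m) (Fin n) ℝ) : ℝ :=
  ‖LinearMap.toContinuousLinearMap (Matrix.toEuclideanLin A)‖



open MeasureTheory ProbabilityTheory Metric

section EscapeAux

/-- Cardinality bound for separated subsets of the unit sphere. -/
lemma escapeAux_card_le_of_separated (n : ℕ) {ε : ℝ} (hε0 : 0 < ε) (hε1 : ε ≤ 1)
    (s : Finset (EuclideanSpace ℝ (Fin n))) (hs : ∀ x ∈ s, ‖x‖ = 1)
    (hsep : ∀ x ∈ s, ∀ y ∈ s, x ≠ y → ε < dist x y) :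
    (s.card : ℝ) ≤ (3 / ε) ^ n := by
  set v := volume (ball (0 : EuclideanSpace ℝ (Fin n)) 1) with hv
  have hv0 : v ≠ 0 := (measure_ball_pos _ _ one_pos).ne'
  have hvt : v ≠ ⊤ := measure_ball_lt_top.ne
  have hball : ∀ x : EuclideanSpace ℝ (Fin n),
      volume (ball x (ε / 2)) = ENNReal.ofReal ((ε / 2) ^ n) * v := by
    intro x
    rw [MeasureTheory.Measure.addHaar_ball_of_pos _ _ (by linarith), finrank_euclideanSpace_fin]
  have hdisj : (↑s : Set (EuclideanSpace ℝ (Fin n))).PairwiseDisjoint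
      (fun x => ball x (ε / 2)) := by
    intro x hx y hy hxy
    exact ball_disjoint_ball (by rw [add_halves]; exact (hsep x hx y hy hxy).le)
  have hsub : ∀ x ∈ s, ball x (ε / 2) ⊆ ball (0 : EuclideanSpace ℝ (Fin n)) (1 + ε / 2) := by
    intro x hx
    apply ball_subset_ball'
    rw [dist_zero_right, hs x hx]; linarith
  have key : (s.card : ENNReal) * ENNReal.ofReal ((ε / 2) ^ n) * v
      ≤ ENNReal.ofReal ((1 + ε / 2) ^ n) * v := by
    calc (s.card : ENNReal) * ENNReal.ofReal ((ε / 2) ^ n) * v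
        = ∑ x ∈ s, volume (ball x (ε / 2)) := by
          simp only [hball, Finset.sum_const, nsmul_eq_mul, mul_assoc]
      _ = volume (⋃ x ∈ s, ball x (ε / 2)) :=
          (measure_biUnion_finset hdisj (fun b _ => measurableSet_ball)).symm
      _ ≤ volume (ball (0 : EuclideanSpace ℝ (Fin n)) (1 + ε / 2)) :=
          measure_mono (Set.iUnion₂_subset hsub)
      _ = ENNReal.ofReal ((1 + ε / 2) ^ n) * v := by
          rw [MeasureTheory.Measure.addHaar_ball_of_pos _ _ (by linarith),
            finrank_euclideanSpace_fin]
  have key2 : (s.card : ENNReal) * ENNReal.ofReal ((ε / 2) ^ n)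
      ≤ ENNReal.ofReal ((1 + ε / 2) ^ n) :=
    (ENNReal.mul_le_mul_iff_left hv0 hvt).mp key
  have hpow : (0:ℝ) < (ε / 2) ^ n := by positivity
  have key3 : (s.card : ℝ) * (ε / 2) ^ n ≤ (1 + ε / 2) ^ n := by
    have := key2
    rw [← ENNReal.ofReal_natCast, ← ENNReal.ofReal_mul (by positivity)] at this
    exact (ENNReal.ofReal_le_ofReal_iff (by positivity)).mp this
  have hfrac : (1 + ε / 2) / (ε / 2) ≤ 3 / ε := by
    rw [div_le_div_iff₀ (by linarith) hε0]
    ring_nf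
    nlinarith
  calc (s.card : ℝ) ≤ (1 + ε / 2) ^ n / (ε / 2) ^ n := by
        rw [le_div_iff₀ hpow]; exact key3
    _ = ((1 + ε / 2) / (ε / 2)) ^ n := (div_pow _ _ _).symm
    _ ≤ (3 / ε) ^ n := by
        apply pow_le_pow_left₀ (by positivity) hfrac


/-- Existence of an ε-net of the unit sphere of controlled cardinality. -/
lemma escapeAux_exists_sphere_net (n : ℕ) {ε : ℝ} (hε0 : 0 < ε) (hε1 : ε ≤ 1) :
    ∃ 𝒩 : Finset (EuclideanSpace ℝ (Fin n)),
      (∀ x ∈ 𝒩, ‖x‖ = 1) ∧ ((𝒩.card : ℝ) ≤ (3 / ε) ^ n) ∧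
      ∀ y : EuclideanSpace ℝ (Fin n), ‖y‖ = 1 → ∃ x ∈ 𝒩, ‖y - x‖ ≤ ε := by
  classical
  set P : Finset (EuclideanSpace ℝ (Fin n)) → Prop :=
    fun s => (∀ x ∈ s, ‖x‖ = 1) ∧ ∀ x ∈ s, ∀ y ∈ s, x ≠ y → ε < dist x y with hP
  set C : Set ℕ := {k | ∃ s, P s ∧ s.card = k} with hC
  have hC0 : 0 ∈ C := ⟨∅, ⟨by simp, by simp⟩, rfl⟩
  have hbdd : BddAbove C := by
    refine ⟨Nat.floor ((3 / ε) ^ n), fun k hk => ?_⟩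
    obtain ⟨s, hs, rfl⟩ := hk
    exact Nat.le_floor (escapeAux_card_le_of_separated n hε0 hε1 s hs.1 hs.2)
  obtain ⟨s, hPs, hcard⟩ := Nat.sSup_mem ⟨0, hC0⟩ hbdd
  refine ⟨s, hPs.1, escapeAux_card_le_of_separated n hε0 hε1 s hPs.1 hPs.2, ?_⟩
  intro y hy
  by_contra hcon
  push_neg at hcon
  have hysep : ∀ x ∈ s, ε < dist y x := by
    intro x hx
    rw [dist_eq_norm]
    exact hcon x hx
  have hyns : y ∉ s := by
    intro hmem
    have := hysep y hmem
    rw [dist_self] at this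
    linarith
  have hPins : P (insert y s) := by
    constructor
    · intro x hx
      rcases Finset.mem_insert.mp hx with rfl | hx
      · exact hy
      · exact hPs.1 x hx
    · intro a ha b hb hab
      rcases Finset.mem_insert.mp ha with ha' | ha' <;>
        rcases Finset.mem_insert.mp hb with hb' | hb'
      · exact absurd (ha'.trans hb'.symm) hab
      · subst ha'; exact hysep b hb'
      · subst hb'; rw [dist_comm]; exact hysep a ha'
      · exact hPs.2 a ha' b hb' hab
  have : s.card + 1 ∈ C := ⟨insert y s, hPins, by rw [Finset.card_insert_of_notMem hyns]⟩
  have hle := le_csSup hbdd this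
  omega

lemma escapeAux_matOpNorm_nonneg {m n : ℕ} (A : Matrix (Fin m) (Fin n) ℝ) : 0 ≤ matOpNorm A :=
  norm_nonneg _

lemma escapeAux_norm_mulVec_le {m n : ℕ} (A : Matrix (Fin m) (Fin n) ℝ)
    (v : EuclideanSpace ℝ (Fin n)) :
    ‖(WithLp.equiv 2 (Fin m → ℝ)).symm (A.mulVec v)‖ ≤ matOpNorm A * ‖v‖ := by
  have h := (LinearMap.toContinuousLinearMap (Matrix.toEuclideanLin A)).le_opNorm v
  rwa [LinearMap.coe_toContinuousLinearMap', Matrix.toEuclideanLin_apply] at h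


lemma escapeAux_norm_sq_eq {N : ℕ} (z : Fin N → ℝ) :
    ‖(WithLp.equiv 2 (Fin N → ℝ)).symm z‖ ^ 2 = ∑ i, (z i) ^ 2 := by
  rw [EuclideanSpace.norm_eq, Real.sq_sqrt (by positivity)]
  simp [sq_abs]

lemma escapeAux_det_lemma {τ δ K : ℝ} (hτ0 : 0 < τ) (hδ0 : 0 < δ) (hK : 1 < K)
    {n N : ℕ} (A : Matrix (Fin N) (Fin n) ℝ) (F : Matrix (Fin N) (Fin N) ℝ)
    (y y' : EuclideanSpace ℝ (Fin n)) (hy : ‖y‖ = 1)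
    (hyy' : ‖y - y'‖ ≤ τ * Real.sqrt δ / (4 * K))
    (hA : matOpNorm A ≤ K * Real.sqrt N)
    (hF : matOpNorm (F - 1) ≤ τ * Real.sqrt δ / (4 * K))
    (hpos : ∀ i, 0 ≤ (F * A).mulVec y i) :
    ((Finset.univ.filter (fun i : Fin N => (∑ j, A i j * y' j) < -τ)).card : ℝ)
      ≤ δ * N / 4 := by
  have hK0 : (0:ℝ) < K := by linarith
  set ε : ℝ := τ * Real.sqrt δ / (4 * K) with hε
  have hε0 : 0 < ε := by positivity
  set u : Fin N → ℝ := A.mulVec y with hu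
  set u' : Fin N → ℝ := A.mulVec y' with hu'
  set w : Fin N → ℝ := (F - 1).mulVec u with hw
  -- pointwise
  have hpoint : ∀ i, (∑ j, A i j * y' j) < -τ →
      τ ^ 2 ≤ 2 * (u i - u' i) ^ 2 + 2 * (w i) ^ 2 := by
    intro i hi
    have hui' : u' i < -τ := by
      rw [hu']; rw [show A.mulVec y' i = ∑ j, A i j * y' j from rfl]; exact hi
    have hw_i : w i = F.mulVec u i - u i := by
      rw [hw]; simp [Matrix.sub_mulVec, Matrix.one_mulVec]
    have hFu : 0 ≤ F.mulVec u i := by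
      show 0 ≤ F.mulVec (A.mulVec y) i
      rw [Matrix.mulVec_mulVec]
      exact hpos i
    have h1 : -(w i) ≤ u i := by rw [hw_i]; linarith
    have h2 : τ < (u i - u' i) + w i := by linarith
    nlinarith [sq_nonneg (u i - u' i - w i), h2, hτ0]
  -- norm bounds
  have hNnn : (0:ℝ) ≤ Real.sqrt N := Real.sqrt_nonneg _
  have hbound1 : ∑ i, (u i - u' i) ^ 2 ≤ (K * Real.sqrt N * ε) ^ 2 := by
    have hdiff : (fun i => u i - u' i) = A.mulVec (y - y') := by
      funext i
      rw [hu, hu', Matrix.mulVec_sub]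
      rfl
    calc ∑ i, (u i - u' i) ^ 2
        = ‖(WithLp.equiv 2 (Fin N → ℝ)).symm (fun i => u i - u' i)‖ ^ 2 :=
          (escapeAux_norm_sq_eq _).symm
      _ ≤ (matOpNorm A * ‖y - y'‖) ^ 2 := by
          apply pow_le_pow_left₀ (norm_nonneg _)
          rw [hdiff]
          exact escapeAux_norm_mulVec_le A (y - y')
      _ ≤ (K * Real.sqrt N * ε) ^ 2 := by
          apply pow_le_pow_left₀ (mul_nonneg (escapeAux_matOpNorm_nonneg A) (norm_nonneg _))
          exact mul_le_mul hA hyy' (norm_nonneg _) (by positivity)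
  have hnu : ‖(WithLp.equiv 2 (Fin N → ℝ)).symm u‖ ≤ K * Real.sqrt N := by
    rw [hu]
    have := escapeAux_norm_mulVec_le A y
    rw [hy, mul_one] at this
    exact this.trans hA
  have hbound2 : ∑ i, (w i) ^ 2 ≤ (ε * (K * Real.sqrt N)) ^ 2 := by
    calc ∑ i, (w i) ^ 2
        = ‖(WithLp.equiv 2 (Fin N → ℝ)).symm w‖ ^ 2 := (escapeAux_norm_sq_eq _).symm
      _ ≤ (matOpNorm (F - 1) * ‖(WithLp.equiv 2 (Fin N → ℝ)).symm u‖) ^ 2 := by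
          apply pow_le_pow_left₀ (norm_nonneg _)
          exact escapeAux_norm_mulVec_le (F - 1) ((WithLp.equiv 2 (Fin N → ℝ)).symm u)
      _ ≤ (ε * (K * Real.sqrt N)) ^ 2 := by
          apply pow_le_pow_left₀ (mul_nonneg (escapeAux_matOpNorm_nonneg _) (norm_nonneg _))
          exact mul_le_mul hF hnu (norm_nonneg _) hε0.le
  -- sum over the filtered set
  set S := Finset.univ.filter (fun i : Fin N => (∑ j, A i j * y' j) < -τ) with hS
  have hcard : (S.card : ℝ) * τ ^ 2 ≤ 2 * ∑ i, (u i - u' i) ^ 2 + 2 * ∑ i, (w i) ^ 2 := by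
    calc (S.card : ℝ) * τ ^ 2 = ∑ _i ∈ S, τ ^ 2 := by
          rw [Finset.sum_const, nsmul_eq_mul]
      _ ≤ ∑ i ∈ S, (2 * (u i - u' i) ^ 2 + 2 * (w i) ^ 2) := by
          apply Finset.sum_le_sum
          intro i hi
          exact hpoint i (Finset.mem_filter.mp hi).2
      _ ≤ ∑ i, (2 * (u i - u' i) ^ 2 + 2 * (w i) ^ 2) := by
          apply Finset.sum_le_sum_of_subset_of_nonneg (Finset.subset_univ S)
          intro i _ _
          positivity
      _ = 2 * ∑ i, (u i - u' i) ^ 2 + 2 * ∑ i, (w i) ^ 2 := by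
          rw [Finset.sum_add_distrib, Finset.mul_sum, Finset.mul_sum]
  have hsqN : (Real.sqrt N) ^ 2 = (N : ℝ) := Real.sq_sqrt (Nat.cast_nonneg N)
  have hsqδ : (Real.sqrt δ) ^ 2 = δ := Real.sq_sqrt hδ0.le
  have hεsq : ε ^ 2 = τ ^ 2 * δ / (16 * K ^ 2) := by
    rw [hε, div_pow, mul_pow, mul_pow, hsqδ]
    norm_num
  have hfinal : (S.card : ℝ) * τ ^ 2 ≤ τ ^ 2 * (δ * N / 4) := by
    have h2 : (K * Real.sqrt N * ε) ^ 2 = K ^ 2 * N * ε ^ 2 := by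
      rw [mul_pow, mul_pow, hsqN]
    have h3 : (ε * (K * Real.sqrt N)) ^ 2 = K ^ 2 * N * ε ^ 2 := by
      rw [mul_pow, mul_pow, hsqN]; ring
    have := hcard.trans (by linarith [hbound1, hbound2] :
      2 * ∑ i, (u i - u' i) ^ 2 + 2 * ∑ i, (w i) ^ 2 ≤ 4 * (K ^ 2 * N * ε ^ 2))
    calc (S.card : ℝ) * τ ^ 2 ≤ 4 * (K ^ 2 * N * ε ^ 2) := this
      _ = τ ^ 2 * (δ * N / 4) := by
          rw [hεsq]; field_simp; ring
  have hτ2 : 0 < τ ^ 2 := by positivity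
  exact le_of_mul_le_mul_right (by linarith [hfinal]) hτ2

lemma escapeAux_bernoulli_tail {Ω : Type} [MeasurableSpace Ω] {μ : Measure Ω} [IsProbabilityMeasure μ]
    {N : ℕ} {δ : ℝ}
    (P : Fin N → Ω → Prop) [∀ i, DecidablePred (P i)]
    (hE : ∀ i, MeasurableSet {ω | P i ω})
    (hInd : iIndepFun
      (fun i ω => if P i ω then (-1 : ℝ) else 0) μ)
    (hp : ∀ i, δ ≤ (μ {ω | P i ω}).toReal) :
    (μ {ω | ((Finset.univ.filter (fun i => P i ω)).card : ℝ) ≤ δ * N / 4}).toReal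
      ≤ Real.exp (-(1 / 2 - Real.exp (-2)) * (δ * N)) := by
  set Y : Fin N → Ω → ℝ := fun i ω => if P i ω then (-1 : ℝ) else 0 with hY
  set X : Ω → ℝ := fun ω => ∑ i, Y i ω with hX
  have hYm : ∀ i, Measurable (Y i) := by
    intro i
    have : Y i = Set.indicator {ω | P i ω} (fun _ => (-1 : ℝ)) := by
      funext ω
      simp only [hY, Set.indicator_apply, Set.mem_setOf_eq]
    rw [this]
    exact measurable_const.indicator (hE i)
  have hXm : Measurable X := by
    apply Finset.measurable_sum
    intro i _
    exact hYm i
  have hXneg : ∀ ω, X ω ≤ 0 := by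
    intro ω
    apply Finset.sum_nonpos
    intro i _
    simp only [hY]
    split <;> norm_num
  have hXcard : ∀ ω, X ω = -((Finset.univ.filter (fun i => P i ω)).card : ℝ) := by
    intro ω
    rw [hX]
    simp only [hY]
    rw [← Finset.sum_filter]
    simp
  have hset : {ω | ((Finset.univ.filter (fun i => P i ω)).card : ℝ) ≤ δ * N / 4}
      = {ω | -(δ * N / 4) ≤ X ω} := by
    ext ω
    simp only [Set.mem_setOf_eq, hXcard ω]
    constructor <;> intro h <;> linarith
  have h_int : Integrable (fun ω => Real.exp (2 * X ω)) μ := by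
    apply Integrable.mono' (integrable_const (1 : ℝ))
      ((hXm.const_mul 2).exp.aestronglyMeasurable)
    filter_upwards with ω
    rw [Real.norm_eq_abs, abs_of_pos (Real.exp_pos _)]
    rw [Real.exp_le_one_iff]
    nlinarith [hXneg ω]
  have hcher := measure_ge_le_exp_mul_mgf (X := X) (μ := μ) (t := 2) (-(δ * N / 4))
    (by norm_num) h_int
  rw [hset]
  refine hcher.trans ?_
  have hXfun : X = ∑ i, Y i := by
    funext ω
    rw [hX, Finset.sum_apply]
  have hmgf : mgf X μ 2 = ∏ i, mgf (Y i) μ 2 := by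
    rw [hXfun]
    exact hInd.mgf_sum hYm Finset.univ
  have hmgfi : ∀ i, mgf (Y i) μ 2 ≤ Real.exp (-(1 - Real.exp (-2)) * δ) := by
    intro i
    have heq : (fun ω => Real.exp (2 * Y i ω))
        = fun ω => 1 - (1 - Real.exp (-2)) * Set.indicator {ω | P i ω} (fun _ => (1 : ℝ)) ω := by
      funext ω
      simp only [hY, Set.indicator_apply, Set.mem_setOf_eq]
      split
      · norm_num
      · norm_num
    have hI : Integrable (Set.indicator {ω | P i ω} (fun _ => (1 : ℝ))) μ :=
      (integrable_const (1 : ℝ)).indicator (hE i)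
    have : mgf (Y i) μ 2 = 1 - (1 - Real.exp (-2)) * (μ {ω | P i ω}).toReal := by
      rw [mgf, heq]
      rw [integral_sub (integrable_const _) (hI.const_mul _)]
      rw [integral_const, integral_const_mul, integral_indicator_const _ (hE i)]
      simp [measure_univ, Measure.real]
    rw [this]
    have hc : 0 < 1 - Real.exp (-2) := by
      have : Real.exp (-2) < 1 := Real.exp_lt_one_iff.mpr (by norm_num)
      linarith
    have h1 : 1 - (1 - Real.exp (-2)) * (μ {ω | P i ω}).toReal
        ≤ 1 - (1 - Real.exp (-2)) * δ := by
      nlinarith [hp i]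
    refine h1.trans ?_
    have := Real.add_one_le_exp (-(1 - Real.exp (-2)) * δ)
    linarith
  have hprod : ∏ i, mgf (Y i) μ 2 ≤ Real.exp (-(1 - Real.exp (-2)) * δ) ^ N := by
    calc ∏ i, mgf (Y i) μ 2 ≤ ∏ _i : Fin N, Real.exp (-(1 - Real.exp (-2)) * δ) := by
          apply Finset.prod_le_prod
          · intro i _; exact mgf_nonneg
          · intro i _; exact hmgfi i
      _ = Real.exp (-(1 - Real.exp (-2)) * δ) ^ N := by
          rw [Finset.prod_const, Finset.card_univ, Fintype.card_fin]
  calc Real.exp (-2 * -(δ * N / 4)) * mgf X μ 2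
      ≤ Real.exp (-2 * -(δ * N / 4)) * Real.exp (-(1 - Real.exp (-2)) * δ) ^ N := by
        apply mul_le_mul_of_nonneg_left _ (Real.exp_pos _).le
        rw [hmgf]
        exact hprod
    _ = Real.exp (-(1 / 2 - Real.exp (-2)) * (δ * N)) := by
        rw [← Real.exp_nat_mul, ← Real.exp_add]
        congr 1
        ring

end EscapeAux

theorem escape_theorem_for_general_random_matrices
    (τ δ K : ℝ) (hτ : τ ∈ Set.Ioc (0 : ℝ) 1) (hδ : δ ∈ Set.Ioc (0 : ℝ) 1) (hK : 1 < K) :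
    ∃ L η : ℝ, 0 < L ∧ 0 < η ∧
      ∀ (n N : ℕ), L * n ≤ (N : ℝ) →
        ∀ (Ω : Type) (_ : MeasurableSpace Ω) (μ : Measure Ω), IsProbabilityMeasure μ →
          ∀ A : Ω → Matrix (Fin N) (Fin n) ℝ, (∀ i j, Measurable fun ω => A ω i j) →
            iIndepFun (fun (i : Fin N) (ω : Ω) => A ω i) μ →
            (∀ y : EuclideanSpace ℝ (Fin n), ‖y‖ = 1 → ∀ i : Fin N,
              δ ≤ (μ {ω | (∑ j, A ω i j * y j) < -τ}).toReal) →
            ∀ F : Ω → Matrix (Fin N) (Fin N) ℝ, (∀ i j, Measurable fun ω => F ω i j) →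
              μ {ω | ∃ y : EuclideanSpace ℝ (Fin n), ‖y‖ = 1 ∧
                  ∀ i : Fin N, 0 ≤ (F ω * A ω).mulVec y i} ≤
                ENNReal.ofReal (Real.exp (-δ ^ 2 * N / 4)) +
                  μ {ω | K * Real.sqrt N < matOpNorm (A ω)} +
                  μ {ω | η < matOpNorm (F ω - 1)} := by
  obtain ⟨hτ0, hτ1⟩ := hτ
  obtain ⟨hδ0, hδ1⟩ := hδ
  have hK0 : (0:ℝ) < K := by linarith
  set ε : ℝ := τ * Real.sqrt δ / (4 * K) with hε
  have hsδ0 : 0 < Real.sqrt δ := Real.sqrt_pos.mpr hδ0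
  have hsδ1 : Real.sqrt δ ≤ 1 := by
    rw [show (1:ℝ) = Real.sqrt 1 from Real.sqrt_one.symm]
    exact Real.sqrt_le_sqrt hδ1
  have hε0 : 0 < ε := by positivity
  have hε1 : ε ≤ 1 := by
    rw [hε, div_le_one (by linarith)]
    nlinarith
  have h3ε : (0:ℝ) < 3 / ε := by positivity
  have hlog0 : 0 < Real.log (3 / ε) := by
    apply Real.log_pos
    rw [lt_div_iff₀ hε0]
    linarith
  refine ⟨10 * Real.log (3 / ε) / δ ^ 2, ε, by positivity, hε0, ?_⟩
  intro n N hLn Ω mΩ μ hμ A hAmeas hindep hlower F hFmeas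
  haveI := hμ
  obtain ⟨𝒩, h𝒩unit, h𝒩card, h𝒩cover⟩ := escapeAux_exists_sphere_net n hε0 hε1
  set Bad : EuclideanSpace ℝ (Fin n) → Set Ω := fun y' =>
    {ω | ((Finset.univ.filter (fun i : Fin N => (∑ j, A ω i j * y' j) < -τ)).card : ℝ)
      ≤ δ * N / 4} with hBad
  have hBadBound : ∀ y' ∈ 𝒩, μ (Bad y')
      ≤ ENNReal.ofReal (Real.exp (-(1 / 2 - Real.exp (-2)) * (δ * N))) := by
    intro y' hy'
    have hEmeas : ∀ i : Fin N, MeasurableSet {ω | (∑ j, A ω i j * y' j) < -τ} := by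
      intro i
      exact measurableSet_lt (Finset.measurable_sum _ fun j _ => (hAmeas i j).mul_const _)
        measurable_const
    have hInd : iIndepFun
        (fun (i : Fin N) (ω : Ω) => if (∑ j, A ω i j * y' j) < -τ then (-1 : ℝ) else 0) μ := by
      have hg : ∀ _i : Fin N, Measurable (fun v : Fin n → ℝ =>
          if (∑ j, v j * y' j) < -τ then (-1 : ℝ) else 0) := by
        intro _i
        refine Measurable.ite (measurableSet_lt ?_ measurable_const) measurable_const
          measurable_const
        exact Finset.measurable_sum _ fun j _ => (measurable_pi_apply j).mul_const _
      exact hindep.comp _ hg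
    have hbt := escapeAux_bernoulli_tail (μ := μ)
      (fun (i : Fin N) (ω : Ω) => (∑ j, A ω i j * y' j) < -τ) hEmeas hInd
      (fun i => hlower y' (h𝒩unit y' hy') i)
    rw [hBad, ← ENNReal.ofReal_toReal (measure_ne_top μ _)]
    exact ENNReal.ofReal_le_ofReal hbt
  have hsub : {ω | ∃ y : EuclideanSpace ℝ (Fin n), ‖y‖ = 1 ∧
      ∀ i : Fin N, 0 ≤ (F ω * A ω).mulVec y i}
      ⊆ ((⋃ y' ∈ 𝒩, Bad y') ∪ {ω | K * Real.sqrt N < matOpNorm (A ω)})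
        ∪ {ω | ε < matOpNorm (F ω - 1)} := by
    intro ω hω
    by_cases hgf : ε < matOpNorm (F ω - 1)
    · exact Set.mem_union_right _ hgf
    left
    by_cases hga : K * Real.sqrt N < matOpNorm (A ω)
    · exact Set.mem_union_right _ hga
    left
    push_neg at hgf hga
    obtain ⟨y, hy, hpos⟩ := hω
    obtain ⟨y', hy'mem, hy'dist⟩ := h𝒩cover y hy
    refine Set.mem_biUnion hy'mem ?_
    exact escapeAux_det_lemma hτ0 hδ0 hK (A ω) (F ω) y y' hy hy'dist hga hgf hpos
  refine (measure_mono hsub).trans ?_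
  refine (measure_union_le _ _).trans ?_
  refine add_le_add ((measure_union_le _ _).trans (add_le_add ?_ le_rfl)) le_rfl
  calc μ (⋃ y' ∈ 𝒩, Bad y') ≤ ∑ y' ∈ 𝒩, μ (Bad y') := measure_biUnion_finset_le _ _
    _ ≤ ∑ _y' ∈ 𝒩, ENNReal.ofReal (Real.exp (-(1 / 2 - Real.exp (-2)) * (δ * N))) :=
        Finset.sum_le_sum hBadBound
    _ = (𝒩.card : ENNReal) * ENNReal.ofReal (Real.exp (-(1 / 2 - Real.exp (-2)) * (δ * N))) := by
        rw [Finset.sum_const, nsmul_eq_mul]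
    _ ≤ ENNReal.ofReal (Real.exp (-δ ^ 2 * N / 4)) := by
        rw [← ENNReal.ofReal_natCast, ← ENNReal.ofReal_mul (by positivity)]
        apply ENNReal.ofReal_le_ofReal
        have hcE : Real.exp (-2) ≤ 3 / 20 := by
          have hee : Real.exp (-2) * (Real.exp 1 * Real.exp 1) = 1 := by
            rw [← Real.exp_add, ← Real.exp_add]; norm_num
          have he := Real.exp_one_gt_d9
          nlinarith
        have hpow : ((3 / ε) : ℝ) ^ n = Real.exp (n * Real.log (3 / ε)) := by
          rw [← Real.exp_log h3ε, ← Real.exp_nat_mul, Real.exp_log h3ε]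
        have key : (n : ℝ) * Real.log (3 / ε) ≤ (N : ℝ) * δ ^ 2 / 10 := by
          have hδ2 : (0:ℝ) < δ ^ 2 := by positivity
          have hm := mul_le_mul_of_nonneg_right hLn (by positivity : (0:ℝ) ≤ δ ^ 2 / 10)
          have heq : 10 * Real.log (3 / ε) / δ ^ 2 * n * (δ ^ 2 / 10)
              = (n : ℝ) * Real.log (3 / ε) := by
            field_simp
          rw [heq] at hm
          linarith
        calc (𝒩.card : ℝ) * Real.exp (-(1 / 2 - Real.exp (-2)) * (δ * N))
            ≤ (3 / ε) ^ n * Real.exp (-(1 / 2 - Real.exp (-2)) * (δ * N)) := by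
              apply mul_le_mul_of_nonneg_right h𝒩card (Real.exp_pos _).le
          _ = Real.exp ((n : ℝ) * Real.log (3 / ε) + -(1 / 2 - Real.exp (-2)) * (δ * N)) := by
              rw [hpow, ← Real.exp_add]
          _ ≤ Real.exp (-δ ^ 2 * N / 4) := by
              apply Real.exp_le_exp.mpr
              have h7 : (7:ℝ)/20 ≤ 1/2 - Real.exp (-2) := by linarith
              have hδN : (0:ℝ) ≤ δ * N := by positivity
              have h8 : δ ^ 2 * N ≤ δ * N := by nlinarith [(Nat.cast_nonneg N : (0:ℝ) ≤ N)]
              nlinarith [key, h7, hδN, h8]
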